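/- arXiv:1002.0231 — 12 statements merged into one kernel-verified Lean document; each statement's English description precedes it below -/
import Mathlib

section
/- The N=3 Cremmer–Gervais R-matrix satisfies unitarity: for all z, q ∈ ℂ with z ≠ 0, q ≠ 0, z² ≠ 1, q² ≠ 1, one has R₁₂(z) · R₂₁(z⁻¹) = ((q² − z²)(1 − q²z²)/((q² − 1)²(z² − 1)²)) · Id₉, where R₁₂(z) = R(z,q) and R₂₁(z) = P R(z,q) P. -/
open Matrix Kronecker

/-- The `N = 3` Cremmer-Gervais `R`-matrix, rows indexed by pairs `(i,j)`,
columns by pairs `(k,l)`. -/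
noncomputable def Rcg (z q : ℂ) : Matrix (Fin 3 × Fin 3) (Fin 3 × Fin 3) ℂ :=
  fun p r =>
    if p.1 = p.2 ∧ p.2 = r.1 ∧ r.1 = r.2 then
      (q * z⁻¹ - q⁻¹ * z) / ((q - q⁻¹) * (z - z⁻¹))
    else if p.1 = r.1 ∧ p.2 = r.2 ∧ p.1 ≠ p.2 then
      (if (r.2 : ℕ) < (r.1 : ℕ) then -q else -q⁻¹) / (q - q⁻¹)
    else if r.2 = p.1 ∧ r.1 = p.2 ∧ p.1 ≠ p.2 then
      (if (r.1 : ℕ) < (r.2 : ℕ) then z else z⁻¹) / (z - z⁻¹)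
    else if min (r.1 : ℕ) (r.2 : ℕ) < (p.1 : ℕ) ∧ (p.1 : ℕ) < max (r.1 : ℕ) (r.2 : ℕ)
        ∧ (p.1 : ℕ) + (p.2 : ℕ) = (r.1 : ℕ) + (r.2 : ℕ) then
      (if (r.1 : ℕ) < (r.2 : ℕ) then 1 else -1)
    else 0

/-- The flip matrix `P` with entries `P^{ij}_{kl} = δ_{il} δ_{jk}`. -/
noncomputable def Pflip : Matrix (Fin 3 × Fin 3) (Fin 3 × Fin 3) ℂ :=
  fun p r => if p.1 = r.2 ∧ p.2 = r.1 then 1 else 0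

/-- `R₂₁(z) = P R(z,q) P`. -/
noncomputable def R21 (z q : ℂ) : Matrix (Fin 3 × Fin 3) (Fin 3 × Fin 3) ℂ :=
  Pflip * Rcg z q * Pflip

lemma Pflip_mul (M : Matrix (Fin 3 × Fin 3) (Fin 3 × Fin 3) ℂ) (p r) :
    (Pflip * M) p r = M (p.2, p.1) r := by
  have h : ∀ y : Fin 3 × Fin 3, Pflip p y = if y = (p.2, p.1) then 1 else 0 := by
    intro y; simp [Pflip, Prod.ext_iff, eq_comm, and_comm]
  simp [Matrix.mul_apply, h, ite_mul, Finset.sum_ite_eq']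

lemma mul_Pflip (M : Matrix (Fin 3 × Fin 3) (Fin 3 × Fin 3) ℂ) (p r) :
    (M * Pflip) p r = M p (r.2, r.1) := by
  have h : ∀ y : Fin 3 × Fin 3, Pflip y r = if y = (r.2, r.1) then 1 else 0 := by
    intro y; simp [Pflip, Prod.ext_iff]
  simp [Matrix.mul_apply, h, mul_ite, Finset.sum_ite_eq']

lemma R21_apply (z q : ℂ) (p r : Fin 3 × Fin 3) :
    R21 z q p r = Rcg z q (p.2, p.1) (r.2, r.1) := by
  rw [R21, mul_Pflip, Pflip_mul]

set_option maxHeartbeats 3000000 in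
/-- Unitarity of the `N = 3` Cremmer-Gervais `R`-matrix. -/
theorem cremmer_gervais_unitarity (z q : ℂ) (hz : z ≠ 0) (hq : q ≠ 0)
    (hz2 : z ^ 2 ≠ 1) (hq2 : q ^ 2 ≠ 1) :
    Rcg z q * R21 z⁻¹ q =
      ((q ^ 2 - z ^ 2) * (1 - q ^ 2 * z ^ 2) / ((q ^ 2 - 1) ^ 2 * (z ^ 2 - 1) ^ 2)) •
        (1 : Matrix (Fin 3 × Fin 3) (Fin 3 × Fin 3) ℂ) := by
  have hq21 : q ^ 2 - 1 ≠ 0 := sub_ne_zero.mpr hq2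
  have hz21 : z ^ 2 - 1 ≠ 0 := sub_ne_zero.mpr hz2
  have hz12 : (1 : ℂ) - z ^ 2 ≠ 0 := fun h => hz21 (by linear_combination -h)
  have hqq : q - q⁻¹ ≠ 0 := by
    intro h; apply hq21; field_simp at h; linear_combination h
  have hzz : z - z⁻¹ ≠ 0 := by
    intro h; apply hz21; field_simp at h; linear_combination h
  have hzz' : z⁻¹ - z ≠ 0 := fun h => hzz (by linear_combination -h)
  have e1 : (q * z⁻¹ - q⁻¹ * z) / ((q - q⁻¹) * (z - z⁻¹))
      = (q ^ 2 - z ^ 2) / ((q ^ 2 - 1) * (z ^ 2 - 1)) := by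
    rw [div_eq_div_iff (mul_ne_zero hqq hzz) (mul_ne_zero hq21 hz21)]
    field_simp
  have e2 : (q * z - q⁻¹ * z⁻¹) / ((q - q⁻¹) * (z⁻¹ - z))
      = (q ^ 2 * z ^ 2 - 1) / ((q ^ 2 - 1) * (1 - z ^ 2)) := by
    rw [div_eq_div_iff (mul_ne_zero hqq hzz') (mul_ne_zero hq21 hz12)]
    field_simp
  have e3 : -q / (q - q⁻¹) = -q ^ 2 / (q ^ 2 - 1) := by
    rw [div_eq_div_iff hqq hq21]; field_simp
  have e4 : -q⁻¹ / (q - q⁻¹) = -1 / (q ^ 2 - 1) := by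
    rw [div_eq_div_iff hqq hq21]; field_simp
  have e5 : z / (z - z⁻¹) = z ^ 2 / (z ^ 2 - 1) := by
    rw [div_eq_div_iff hzz hz21]; field_simp
  have e6 : z⁻¹ / (z - z⁻¹) = 1 / (z ^ 2 - 1) := by
    rw [div_eq_div_iff hzz hz21]; field_simp
  have e7 : z⁻¹ / (z⁻¹ - z) = 1 / (1 - z ^ 2) := by
    rw [div_eq_div_iff hzz' hz12]; field_simp
  have e8 : z / (z⁻¹ - z) = z ^ 2 / (1 - z ^ 2) := by
    rw [div_eq_div_iff hzz' hz12]; field_simp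
  ext p r
  simp only [Matrix.mul_apply, R21_apply, Matrix.smul_apply, Matrix.one_apply,
    Fintype.sum_prod_type, Fin.sum_univ_three]
  fin_cases p <;> fin_cases r <;>
    simp [Rcg, Prod.ext_iff] <;>
    simp only [e1, e2, e3, e4, e5, e6, e7, e8] <;>
    field_simp <;>
    ring
end

section
/- The N=3 Cremmer–Gervais R-matrix satisfies T-invariance: for all z, q ∈ ℂ with z ≠ 0, q ≠ 0, z² ≠ 1, q² ≠ 1, one has R(z,q) = −(T ⊗ T) · R(z⁻¹, q⁻¹) · (T ⊗ T). -/
open Matrix Kronecker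

/-- The matrix `T` with `T_{ij} = 1` iff `i + j = 2`. -/
noncomputable def Tmat : Matrix (Fin 3) (Fin 3) ℂ :=
  fun i j => if (i : ℕ) + (j : ℕ) = 2 then 1 else 0

private lemma TT_apply (a b : Fin 3 × Fin 3) :
    (Tmat ⊗ₖ Tmat) a b = if b = (a.1.rev, a.2.rev) then 1 else 0 := by
  obtain ⟨a1, a2⟩ := a; obtain ⟨b1, b2⟩ := b
  fin_cases a1 <;> fin_cases a2 <;> fin_cases b1 <;> fin_cases b2 <;>
    simp [Tmat, Matrix.kroneckerMap_apply, Prod.ext_iff, Fin.ext_iff, Fin.rev]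

private lemma TT_apply' (a b : Fin 3 × Fin 3) :
    (Tmat ⊗ₖ Tmat) a b = if a = (b.1.rev, b.2.rev) then 1 else 0 := by
  obtain ⟨a1, a2⟩ := a; obtain ⟨b1, b2⟩ := b
  fin_cases a1 <;> fin_cases a2 <;> fin_cases b1 <;> fin_cases b2 <;>
    simp [Tmat, Matrix.kroneckerMap_apply, Prod.ext_iff, Fin.ext_iff, Fin.rev]

private lemma key (M : Matrix (Fin 3 × Fin 3) (Fin 3 × Fin 3) ℂ) (p r : Fin 3 × Fin 3) :
    ((Tmat ⊗ₖ Tmat) * M * (Tmat ⊗ₖ Tmat)) p r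
      = M (p.1.rev, p.2.rev) (r.1.rev, r.2.rev) := by
  simp only [Matrix.mul_apply, TT_apply, TT_apply', ite_mul, mul_ite, one_mul, mul_one,
    zero_mul, mul_zero, Finset.sum_ite_eq, Finset.sum_ite_eq', Finset.mem_univ, if_true]
  have h : ∀ x : Fin 3 × Fin 3, (r = (x.1.rev, x.2.rev)) ↔ (x = (r.1.rev, r.2.rev)) := by
    intro x
    constructor <;> intro h <;> subst h <;> simp [Prod.ext_iff, Fin.rev_rev]
  simp only [h, Finset.sum_ite_eq', Finset.mem_univ, if_true]
set_option maxHeartbeats 2000000 in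
/-- `T`-invariance of the `N = 3` Cremmer-Gervais `R`-matrix. -/
theorem cremmer_gervais_T_invariance (z q : ℂ) (hz : z ≠ 0) (hq : q ≠ 0)
    (hz2 : z ^ 2 ≠ 1) (hq2 : q ^ 2 ≠ 1) :
    Rcg z q = -((Tmat ⊗ₖ Tmat) * Rcg z⁻¹ q⁻¹ * (Tmat ⊗ₖ Tmat)) := by
  ext ⟨i, j⟩ ⟨k, l⟩
  rw [Matrix.neg_apply, key]
  fin_cases i <;> fin_cases j <;> fin_cases k <;> fin_cases l <;>
    norm_num [Rcg, Fin.rev, Fin.ext_iff, inv_inv] <;>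
    simp only [show q⁻¹ - q = -(q - q⁻¹) by ring, show z⁻¹ - z = -(z - z⁻¹) by ring,
      div_neg, neg_div, neg_neg, neg_mul_neg, mul_neg, neg_mul] <;>
    ring
end

section
/- Every matrix family of the first type solves the reflection equation for the N=3 Cremmer–Gervais R-matrix: for all B₁,B₂,D₁,D₂,E₁,E₂,E₃ ∈ ℂ, all q ∈ ℂ with q ≠ 0, q² ≠ 1, and every admissible pair (z₁,z₂), the function K(z) := K_I(z; B₁,B₂,D₁,D₂,E₁,E₂,E₃) satisfies R(z₁/z₂,q) K(z₁)₁ R₂₁(z₁z₂) K(z₂)₂ = K(z₂)₂ R(z₁z₂,q) K(z₁)₁ R₂₁(z₁/z₂). -/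
open Matrix Kronecker

/-- `M₁ = M ⊗ Id₃`. -/
noncomputable def Mleft (M : Matrix (Fin 3) (Fin 3) ℂ) :
    Matrix (Fin 3 × Fin 3) (Fin 3 × Fin 3) ℂ :=
  M ⊗ₖ (1 : Matrix (Fin 3) (Fin 3) ℂ)

/-- `M₂ = Id₃ ⊗ M`. -/
noncomputable def Mright (M : Matrix (Fin 3) (Fin 3) ℂ) :
    Matrix (Fin 3 × Fin 3) (Fin 3 × Fin 3) ℂ :=
  (1 : Matrix (Fin 3) (Fin 3) ℂ) ⊗ₖ M

/-- `K` satisfies the reflection equation with parameter `q` at the pair `(z₁, z₂)`. -/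
def ReflEq (q : ℂ) (K : ℂ → Matrix (Fin 3) (Fin 3) ℂ) (z₁ z₂ : ℂ) : Prop :=
  Rcg (z₁ / z₂) q * Mleft (K z₁) * R21 (z₁ * z₂) q * Mright (K z₂) =
    Mright (K z₂) * Rcg (z₁ * z₂) q * Mleft (K z₁) * R21 (z₁ / z₂) q

noncomputable def KI0 (z D₁ D₂ E₁ : ℂ) : Matrix (Fin 3) (Fin 3) ℂ :=
  E₁ ^ 2 • !![D₂ ^ 2 * z ^ 2, D₁ * D₂ * (z ^ 4 - 1), D₁ ^ 2 * z ^ 2 * (z ^ 4 - 1);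
      0, D₂ ^ 2 * z ^ 2, D₁ * D₂ * (z ^ 4 - 1);
      0, 0, D₂ ^ 2 * z ^ 2]

noncomputable def KI1 (z B₁ B₂ D₁ E₂ : ℂ) : Matrix (Fin 3) (Fin 3) ℂ :=
  (-(D₁ * E₂ * z ^ 2)) • !![B₁, 0, 0; 0, B₁, B₂ * (1 - z ^ 4); 0, 0, B₁ * z ^ 4]

/-- The first family of `K`-matrices. -/
noncomputable def KI (z B₁ B₂ D₁ D₂ E₁ E₂ E₃ : ℂ) : Matrix (Fin 3) (Fin 3) ℂ :=
  KI0 z D₁ D₂ E₁ - z ^ 6 • (Tmat * KI0 z⁻¹ D₂ D₁ E₃ * Tmat)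
    + KI1 z B₁ B₂ D₁ E₂ - z ^ 6 • (Tmat * KI1 z⁻¹ B₂ B₁ D₂ E₂ * Tmat)

/-- Denominator-free version of the Cremmer–Gervais `R`-matrix. -/
noncomputable def Rn (z q : ℂ) : Matrix (Fin 3 × Fin 3) (Fin 3 × Fin 3) ℂ :=
  Matrix.of fun p r =>
    if p.1 = p.2 ∧ p.2 = r.1 ∧ r.1 = r.2 then q ^ 2 - z ^ 2
    else if p.1 = r.1 ∧ p.2 = r.2 ∧ p.1 ≠ p.2 then
      (if (r.2 : ℕ) < (r.1 : ℕ) then -q ^ 2 else -1) * (z ^ 2 - 1)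
    else if r.2 = p.1 ∧ r.1 = p.2 ∧ p.1 ≠ p.2 then
      (if (r.1 : ℕ) < (r.2 : ℕ) then z ^ 2 else 1) * (q ^ 2 - 1)
    else if min (r.1 : ℕ) (r.2 : ℕ) < (p.1 : ℕ) ∧ (p.1 : ℕ) < max (r.1 : ℕ) (r.2 : ℕ)
        ∧ (p.1 : ℕ) + (p.2 : ℕ) = (r.1 : ℕ) + (r.2 : ℕ) then
      (if (r.1 : ℕ) < (r.2 : ℕ) then 1 else -1) * ((q ^ 2 - 1) * (z ^ 2 - 1))
    else 0

set_option linter.unreachableTactic false in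
lemma Rcg_scaled (z q : ℂ) (hz : z ≠ 0) (hz2 : z ^ 2 ≠ 1) (hq : q ≠ 0) (hq2 : q ^ 2 ≠ 1) :
    Rcg z q = ((q ^ 2 - 1) * (z ^ 2 - 1))⁻¹ • Rn z q := by
  have hq2' : q ^ 2 - 1 ≠ 0 := sub_ne_zero.mpr hq2
  have hz2' : z ^ 2 - 1 ≠ 0 := sub_ne_zero.mpr hz2
  have hqq : q - q⁻¹ ≠ 0 := by
    intro h0
    exact hq2 ((sq q).trans (by nth_rewrite 2 [sub_eq_zero.mp h0]; exact mul_inv_cancel₀ hq))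
  have hzz : z - z⁻¹ ≠ 0 := by
    intro h0
    exact hz2 ((sq z).trans (by nth_rewrite 2 [sub_eq_zero.mp h0]; exact mul_inv_cancel₀ hz))
  ext p r
  simp only [Rcg, Rn, Matrix.smul_apply, Matrix.of_apply, smul_eq_mul]
  split_ifs <;>
    first
    | (rw [div_eq_iff (mul_ne_zero hqq hzz), eq_comm, inv_mul_eq_div, div_mul_eq_mul_div,
        div_eq_iff (mul_ne_zero hq2' hz2')]; field_simp; first | ring1 | (left; ring1) | tauto)
    | (rw [div_eq_iff hqq, eq_comm, inv_mul_eq_div, div_mul_eq_mul_div,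
        div_eq_iff (mul_ne_zero hq2' hz2')]; field_simp; first | ring1 | (left; ring1) | tauto)
    | (rw [div_eq_iff hzz, eq_comm, inv_mul_eq_div, div_mul_eq_mul_div,
        div_eq_iff (mul_ne_zero hq2' hz2')]; field_simp; first | ring1 | (left; ring1) | tauto)
    | (rw [eq_comm, inv_mul_eq_div, div_mul_eq_mul_div,
        div_eq_iff (mul_ne_zero hq2' hz2')]; field_simp; first | ring1 | (left; ring1) | tauto)
    | (rw [eq_comm, inv_mul_eq_div, div_eq_iff (mul_ne_zero hq2' hz2')];
        field_simp; first | ring1 | (left; ring1) | tauto)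
    | (rw [div_eq_iff (mul_ne_zero hqq hzz)]; field_simp; done)
    | (rw [div_eq_iff hqq]; field_simp; done)
    | (rw [div_eq_iff hzz]; field_simp; done)
    | (rw [one_mul, eq_comm, inv_mul_eq_div, div_self (mul_ne_zero hq2' hz2')])
    | (rw [neg_one_mul, eq_comm, inv_mul_eq_div, neg_div, div_self (mul_ne_zero hq2' hz2')])
    | simp

/-- Simultaneous flip of both index pairs. -/
noncomputable def flipM (A : Matrix (Fin 3 × Fin 3) (Fin 3 × Fin 3) ℂ) :
    Matrix (Fin 3 × Fin 3) (Fin 3 × Fin 3) ℂ :=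
  Matrix.of fun p r : Fin 3 × Fin 3 => A (p.2, p.1) (r.2, r.1)

lemma flipM_smul (c : ℂ) (A : Matrix (Fin 3 × Fin 3) (Fin 3 × Fin 3) ℂ) :
    flipM (c • A) = c • flipM A := by
  ext p r; simp [flipM]

lemma Pflip_conj (A : Matrix (Fin 3 × Fin 3) (Fin 3 × Fin 3) ℂ) :
    Pflip * A * Pflip = flipM A := by
  unfold flipM
  ext p r
  have h1 : ∀ s : Fin 3 × Fin 3, Pflip p s = if (p.2, p.1) = s then 1 else 0 := by
    intro s; simp [Pflip, Prod.ext_iff, and_comm, eq_comm]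
  have h2 : ∀ s : Fin 3 × Fin 3, Pflip s r = if s = (r.2, r.1) then 1 else 0 := by
    intro s; simp [Pflip, Prod.ext_iff, and_comm]
  simp [Matrix.mul_apply, h1, h2]

lemma R21_scaled (z q : ℂ) (hz : z ≠ 0) (hz2 : z ^ 2 ≠ 1) (hq : q ≠ 0) (hq2 : q ^ 2 ≠ 1) :
    R21 z q = ((q ^ 2 - 1) * (z ^ 2 - 1))⁻¹ • flipM (Rn z q) := by
  rw [R21, Rcg_scaled z q hz hz2 hq hq2, Matrix.mul_smul, Matrix.smul_mul, Pflip_conj]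

lemma Tmat_eq : Tmat = !![0,0,1;0,1,0;1,0,0] := by
  ext i j; fin_cases i <;> fin_cases j <;> rfl

set_option maxHeartbeats 1000000 in
lemma KI_eq (z B₁ B₂ D₁ D₂ E₁ E₂ E₃ : ℂ) (hz : z ≠ 0) :
    KI z B₁ B₂ D₁ D₂ E₁ E₂ E₃ =
    !![E₁^2*D₂^2*z^2 - E₃^2*D₁^2*z^4 - B₁*D₁*E₂*z^2 + B₂*D₂*E₂,
       E₁^2*D₁*D₂*(z^4-1),
       E₁^2*D₁^2*z^2*(z^4-1);
       -(E₃^2*D₁*D₂*(z^2-z^6)) + B₁*D₂*E₂*(z^4-1),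
       E₁^2*D₂^2*z^2 - E₃^2*D₁^2*z^4 - B₁*D₁*E₂*z^2 + B₂*D₂*E₂*z^4,
       E₁^2*D₁*D₂*(z^4-1) + B₂*D₁*E₂*z^2*(z^4-1);
       E₃^2*D₂^2*(z^4-1),
       -(E₃^2*D₁*D₂*(z^2-z^6)),
       E₁^2*D₂^2*z^2 - E₃^2*D₁^2*z^4 - B₁*D₁*E₂*z^6 + B₂*D₂*E₂*z^4] := by
  ext i j
  fin_cases i <;> fin_cases j <;>
    · simp [KI, KI0, KI1, Tmat_eq, Matrix.mul_apply, Fin.sum_univ_three]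
      try field_simp
      try ring


/-- Homogenized `Rn (u/v) q` (times `v ^ 4`). -/
noncomputable def Rh (u v q : ℂ) : Matrix (Fin 3 × Fin 3) (Fin 3 × Fin 3) ℂ :=
  Matrix.of fun p r =>
    if p.1 = p.2 ∧ p.2 = r.1 ∧ r.1 = r.2 then q ^ 2 * v ^ 4 - u ^ 2 * v ^ 2
    else if p.1 = r.1 ∧ p.2 = r.2 ∧ p.1 ≠ p.2 then
      (if (r.2 : ℕ) < (r.1 : ℕ) then -q ^ 2 else -1) * ((u ^ 2 - v ^ 2) * v ^ 2)
    else if r.2 = p.1 ∧ r.1 = p.2 ∧ p.1 ≠ p.2 then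
      (if (r.1 : ℕ) < (r.2 : ℕ) then u ^ 2 * v ^ 2 else v ^ 4) * (q ^ 2 - 1)
    else if min (r.1 : ℕ) (r.2 : ℕ) < (p.1 : ℕ) ∧ (p.1 : ℕ) < max (r.1 : ℕ) (r.2 : ℕ)
        ∧ (p.1 : ℕ) + (p.2 : ℕ) = (r.1 : ℕ) + (r.2 : ℕ) then
      (if (r.1 : ℕ) < (r.2 : ℕ) then 1 else -1) * ((q ^ 2 - 1) * ((u ^ 2 - v ^ 2) * v ^ 2))
    else 0

lemma Rn_div (u v q : ℂ) (hv : v ≠ 0) : Rn (u / v) q = (v ^ 4)⁻¹ • Rh u v q := by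
  ext p r
  simp only [Rn, Rh, Matrix.of_apply, Matrix.smul_apply, smul_eq_mul]
  split_ifs <;> first | (field_simp; ring1) | field_simp | simp


set_option maxHeartbeats 1000000000 in
lemma key_identity (B₁ B₂ D₁ D₂ E₁ E₂ E₃ q z₁ z₂ : ℂ)
    (K1 K2 : Matrix (Fin 3) (Fin 3) ℂ)
    (hK1 : K1 = !![E₁^2*D₂^2*z₁^2 - E₃^2*D₁^2*z₁^4 - B₁*D₁*E₂*z₁^2 + B₂*D₂*E₂,
       E₁^2*D₁*D₂*(z₁^4-1),
       E₁^2*D₁^2*z₁^2*(z₁^4-1);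
       -(E₃^2*D₁*D₂*(z₁^2-z₁^6)) + B₁*D₂*E₂*(z₁^4-1),
       E₁^2*D₂^2*z₁^2 - E₃^2*D₁^2*z₁^4 - B₁*D₁*E₂*z₁^2 + B₂*D₂*E₂*z₁^4,
       E₁^2*D₁*D₂*(z₁^4-1) + B₂*D₁*E₂*z₁^2*(z₁^4-1);
       E₃^2*D₂^2*(z₁^4-1),
       -(E₃^2*D₁*D₂*(z₁^2-z₁^6)),
       E₁^2*D₂^2*z₁^2 - E₃^2*D₁^2*z₁^4 - B₁*D₁*E₂*z₁^6 + B₂*D₂*E₂*z₁^4])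
    (hK2 : K2 = !![E₁^2*D₂^2*z₂^2 - E₃^2*D₁^2*z₂^4 - B₁*D₁*E₂*z₂^2 + B₂*D₂*E₂,
       E₁^2*D₁*D₂*(z₂^4-1),
       E₁^2*D₁^2*z₂^2*(z₂^4-1);
       -(E₃^2*D₁*D₂*(z₂^2-z₂^6)) + B₁*D₂*E₂*(z₂^4-1),
       E₁^2*D₂^2*z₂^2 - E₃^2*D₁^2*z₂^4 - B₁*D₁*E₂*z₂^2 + B₂*D₂*E₂*z₂^4,
       E₁^2*D₁*D₂*(z₂^4-1) + B₂*D₁*E₂*z₂^2*(z₂^4-1);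
       E₃^2*D₂^2*(z₂^4-1),
       -(E₃^2*D₁*D₂*(z₂^2-z₂^6)),
       E₁^2*D₂^2*z₂^2 - E₃^2*D₁^2*z₂^4 - B₁*D₁*E₂*z₂^6 + B₂*D₂*E₂*z₂^4]) :
    Rh z₁ z₂ q * Mleft K1 * flipM (Rn (z₁ * z₂) q) * Mright K2 =
      Mright K2 * Rn (z₁ * z₂) q * Mleft K1 * flipM (Rh z₁ z₂ q) := by
  ext p r
  obtain ⟨a, b⟩ := p
  obtain ⟨c, d⟩ := r
  fin_cases a <;> fin_cases b <;> fin_cases c <;> fin_cases d <;>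
    · subst hK1 hK2
      simp only [Mleft, Mright, kroneckerMap_apply, Matrix.mul_apply,
        Matrix.of_apply, flipM, Fintype.sum_prod_type, Fin.sum_univ_three]
      simp [Rh, Rn, Matrix.one_apply]
      ring1

set_option maxHeartbeats 4000000 in
/-- Every matrix of the first family solves the reflection equation. -/
theorem KI_solves_reflection_equation (B₁ B₂ D₁ D₂ E₁ E₂ E₃ q : ℂ)
    (hq : q ≠ 0) (hq2 : q ^ 2 ≠ 1) (z₁ z₂ : ℂ) (hz₁ : z₁ ≠ 0) (hz₂ : z₂ ≠ 0)
    (hzz : z₁ ^ 2 ≠ z₂ ^ 2) (hz₁₂ : z₁ ^ 2 * z₂ ^ 2 ≠ 1) :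
    ReflEq q (fun z => KI z B₁ B₂ D₁ D₂ E₁ E₂ E₃) z₁ z₂ := by
  have hw1 : z₁ / z₂ ≠ 0 := div_ne_zero hz₁ hz₂
  have hw2 : z₁ * z₂ ≠ 0 := mul_ne_zero hz₁ hz₂
  have hw1sq : (z₁ / z₂) ^ 2 ≠ 1 := by
    rw [div_pow]
    intro h
    exact hzz ((div_eq_one_iff_eq (pow_ne_zero 2 hz₂)).mp h)
  have hw2sq : (z₁ * z₂) ^ 2 ≠ 1 := by rw [mul_pow]; exact hz₁₂
  unfold ReflEq
  simp only [KI_eq z₁ B₁ B₂ D₁ D₂ E₁ E₂ E₃ hz₁, KI_eq z₂ B₁ B₂ D₁ D₂ E₁ E₂ E₃ hz₂]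
  rw [Rcg_scaled (z₁ / z₂) q hw1 hw1sq hq hq2, Rcg_scaled (z₁ * z₂) q hw2 hw2sq hq hq2,
    R21_scaled (z₁ * z₂) q hw2 hw2sq hq hq2, R21_scaled (z₁ / z₂) q hw1 hw1sq hq hq2,
    Rn_div z₁ z₂ q hz₂, flipM_smul]
  simp only [Matrix.smul_mul, Matrix.mul_smul, smul_smul]
  congr 1
  · ring
  exact key_identity B₁ B₂ D₁ D₂ E₁ E₂ E₃ q z₁ z₂ _ _ rfl rfl
end

section
/- Every matrix family of the second type solves the reflection equation for the N=3 Cremmer–Gervais R-matrix: for all b,F₁,F₂,G₁,G₂,G₃ ∈ ℂ, all q ∈ ℂ with q ≠ 0, q² ≠ 1, and every admissible pair (z₁,z₂), the function K(z) := K_II(z; b,F₁,F₂,G₁,G₂,G₃) satisfies R(z₁/z₂,q) K(z₁)₁ R₂₁(z₁z₂) K(z₂)₂ = K(z₂)₂ R(z₁z₂,q) K(z₁)₁ R₂₁(z₁/z₂). -/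
open Matrix Kronecker

noncomputable def KII0 (z F₁ G₁ G₂ G₃ : ℂ) : Matrix (Fin 3) (Fin 3) ℂ :=
  (-F₁) • !![G₃, 0, G₁ * (1 - z ^ 4); 0, G₃, G₂ * (1 - z ^ 4); 0, 0, G₃ * z ^ 4]

/-- The second family of `K`-matrices. -/
noncomputable def KII (z b F₁ F₂ G₁ G₂ G₃ : ℂ) : Matrix (Fin 3) (Fin 3) ℂ :=
  (b * z ^ 2) • (1 : Matrix (Fin 3) (Fin 3) ℂ) + KII0 z F₁ G₁ G₂ G₃
    - z ^ 4 • (Tmat * KII0 z⁻¹ F₂ G₃ (-G₂) G₁ * Tmat)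

noncomputable def Rp (w q : ℂ) : Matrix (Fin 3 × Fin 3) (Fin 3 × Fin 3) ℂ :=
  fun p r =>
    if p.1 = p.2 ∧ p.2 = r.1 ∧ r.1 = r.2 then q ^ 2 - w
    else if p.1 = r.1 ∧ p.2 = r.2 ∧ p.1 ≠ p.2 then
      (if (r.2 : ℕ) < (r.1 : ℕ) then -q ^ 2 else -1) * (w - 1)
    else if r.2 = p.1 ∧ r.1 = p.2 ∧ p.1 ≠ p.2 then
      (if (r.1 : ℕ) < (r.2 : ℕ) then w else 1) * (q ^ 2 - 1)
    else if min (r.1 : ℕ) (r.2 : ℕ) < (p.1 : ℕ) ∧ (p.1 : ℕ) < max (r.1 : ℕ) (r.2 : ℕ)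
        ∧ (p.1 : ℕ) + (p.2 : ℕ) = (r.1 : ℕ) + (r.2 : ℕ) then
      (if (r.1 : ℕ) < (r.2 : ℕ) then 1 else -1) * ((q ^ 2 - 1) * (w - 1))
    else 0

noncomputable def Rp21 (w q : ℂ) : Matrix (Fin 3 × Fin 3) (Fin 3 × Fin 3) ℂ :=
  fun p r => Rp w q (p.2, p.1) (r.2, r.1)

lemma Rcg_eq (z q : ℂ) (hz : z ≠ 0) (hq : q ≠ 0) (hz2 : z ^ 2 - 1 ≠ 0)
    (hq2 : q ^ 2 - 1 ≠ 0) :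
    Rcg z q = (((q ^ 2 - 1) * (z ^ 2 - 1))⁻¹) • Rp (z ^ 2) q := by
  have e1 : q - q⁻¹ = (q ^ 2 - 1) / q := by field_simp
  have e2 : z - z⁻¹ = (z ^ 2 - 1) / z := by field_simp
  ext p r
  simp only [Rcg, Rp, Matrix.smul_apply, smul_eq_mul, e1, e2]
  split_ifs <;> (try field_simp [hz, hq, hz2, hq2]) <;> (try ring)

lemma P_mul (M : Matrix (Fin 3 × Fin 3) (Fin 3 × Fin 3) ℂ) :
    Pflip * M = Matrix.of (fun p r => M (p.2, p.1) r) := by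
  ext ⟨a, b⟩ r
  fin_cases a <;> fin_cases b <;>
    simp [Matrix.mul_apply, Pflip, Fintype.sum_prod_type, Fin.sum_univ_three]

lemma mul_P (M : Matrix (Fin 3 × Fin 3) (Fin 3 × Fin 3) ℂ) :
    M * Pflip = Matrix.of (fun p r => M p (r.2, r.1)) := by
  ext p ⟨c, d⟩
  fin_cases c <;> fin_cases d <;>
    simp [Matrix.mul_apply, Pflip, Fintype.sum_prod_type, Fin.sum_univ_three]

lemma R21_eq (z q : ℂ) (hz : z ≠ 0) (hq : q ≠ 0) (hz2 : z ^ 2 - 1 ≠ 0)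
    (hq2 : q ^ 2 - 1 ≠ 0) :
    R21 z q = (((q ^ 2 - 1) * (z ^ 2 - 1))⁻¹) • Rp21 (z ^ 2) q := by
  rw [R21, Rcg_eq z q hz hq hz2 hq2, Matrix.mul_smul, Matrix.smul_mul, mul_P, P_mul]
  ext p r
  simp [Rp21]

lemma KII_explicit (z b F₁ F₂ G₁ G₂ G₃ : ℂ) (hz : z ≠ 0) :
    KII z b F₁ F₂ G₁ G₂ G₃ =
      !![b*z^2 - F₁*G₃ + F₂*G₁, 0, -(F₁*G₁)*(1-z^4);
         -(F₂*G₂)*(z^4-1), b*z^2 - F₁*G₃ + F₂*G₁*z^4, -(F₁*G₂)*(1-z^4);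
         (F₂*G₃)*(z^4-1), 0, b*z^2 - F₁*G₃*z^4 + F₂*G₁*z^4] := by
  ext i j
  fin_cases i <;> fin_cases j <;>
    simp [KII, KII0, Tmat, Matrix.mul_apply, Fin.sum_univ_three, Matrix.one_apply,
      Matrix.vecHead, Matrix.vecTail] <;>
    first | ring1 | (field_simp [hz] <;> ring1)

set_option maxHeartbeats 0 in
lemma poly_identity (b F₁ F₂ G₁ G₂ G₃ q z₁ z₂ : ℂ) (hz₁ : z₁ ≠ 0) (hz₂ : z₂ ≠ 0) :
    Rp ((z₁/z₂)^2) q * Mleft (KII z₁ b F₁ F₂ G₁ G₂ G₃) * Rp21 ((z₁*z₂)^2) q *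
      Mright (KII z₂ b F₁ F₂ G₁ G₂ G₃) =
    Mright (KII z₂ b F₁ F₂ G₁ G₂ G₃) * Rp ((z₁*z₂)^2) q * Mleft (KII z₁ b F₁ F₂ G₁ G₂ G₃) *
      Rp21 ((z₁/z₂)^2) q := by
  rw [KII_explicit z₁ b F₁ F₂ G₁ G₂ G₃ hz₁, KII_explicit z₂ b F₁ F₂ G₁ G₂ G₃ hz₂]
  ext ⟨i, j⟩ ⟨k, l⟩
  fin_cases i <;> fin_cases j <;> fin_cases k <;> fin_cases l <;>
    simp [Matrix.mul_apply, Fintype.sum_prod_type, Fin.sum_univ_three, Rp, Rp21,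
      Mleft, Mright, Matrix.kroneckerMap_apply, Matrix.one_apply,
      Matrix.vecHead, Matrix.vecTail] <;>
    (field_simp [hz₁, hz₂]; try ring1)

/-- Every matrix of the second family solves the reflection equation. -/
theorem KII_solves_reflection_equation (b F₁ F₂ G₁ G₂ G₃ q : ℂ)
    (hq : q ≠ 0) (hq2 : q ^ 2 ≠ 1) (z₁ z₂ : ℂ) (hz₁ : z₁ ≠ 0) (hz₂ : z₂ ≠ 0)
    (hzz : z₁ ^ 2 ≠ z₂ ^ 2) (hz₁₂ : z₁ ^ 2 * z₂ ^ 2 ≠ 1) :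
    ReflEq q (fun z => KII z b F₁ F₂ G₁ G₂ G₃) z₁ z₂ := by
  have hq2' : q ^ 2 - 1 ≠ 0 := sub_ne_zero.mpr hq2
  have hz12 : z₁ / z₂ ≠ 0 := div_ne_zero hz₁ hz₂
  have hzm : z₁ * z₂ ≠ 0 := mul_ne_zero hz₁ hz₂
  have hA : (z₁ / z₂) ^ 2 - 1 ≠ 0 := by
    have h : (z₁ / z₂) ^ 2 - 1 = (z₁ ^ 2 - z₂ ^ 2) / z₂ ^ 2 := by field_simp
    rw [h]; exact div_ne_zero (sub_ne_zero.mpr hzz) (pow_ne_zero 2 hz₂)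
  have hB : (z₁ * z₂) ^ 2 - 1 ≠ 0 := by
    have h : (z₁ * z₂) ^ 2 - 1 = z₁ ^ 2 * z₂ ^ 2 - 1 := by ring
    rw [h]; exact sub_ne_zero.mpr hz₁₂
  show Rcg (z₁ / z₂) q * Mleft (KII z₁ b F₁ F₂ G₁ G₂ G₃) * R21 (z₁ * z₂) q *
      Mright (KII z₂ b F₁ F₂ G₁ G₂ G₃) =
    Mright (KII z₂ b F₁ F₂ G₁ G₂ G₃) * Rcg (z₁ * z₂) q * Mleft (KII z₁ b F₁ F₂ G₁ G₂ G₃) *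
      R21 (z₁ / z₂) q
  rw [Rcg_eq (z₁ / z₂) q hz12 hq hA hq2', Rcg_eq (z₁ * z₂) q hzm hq hB hq2',
    R21_eq (z₁ * z₂) q hzm hq hB hq2', R21_eq (z₁ / z₂) q hz12 hq hA hq2']
  simp only [Matrix.smul_mul, Matrix.mul_smul, smul_smul]
  rw [poly_identity b F₁ F₂ G₁ G₂ G₃ q z₁ z₂ hz₁ hz₂, mul_comm
    (((q ^ 2 - 1) * ((z₁ / z₂) ^ 2 - 1))⁻¹) (((q ^ 2 - 1) * ((z₁ * z₂) ^ 2 - 1))⁻¹)]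
end

section
/- Transformation of the second family under G-conjugation: for all b,F₁,F₂,G₁,G₂,G₃ ∈ ℂ, every ω ∈ ℂ with ω³ = 1, and every z ∈ ℂ with z ≠ 0, one has G · K_II(z; b,F₁,F₂,G₁,G₂,G₃) · G⁻¹ = K_II(z; b, ωF₁, F₂, G₁, ωG₂, ω²G₃), where G = diag(1, ω, ω²). -/
open Matrix Kronecker

/-- `G = diag(1, ω, ω²)`. -/
noncomputable def Gmat (ω : ℂ) : Matrix (Fin 3) (Fin 3) ℂ :=
  Matrix.diagonal ![1, ω, ω ^ 2]

/-- Transformation of the second family under `G`-conjugation. -/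
theorem KII_G_conjugation (b F₁ F₂ G₁ G₂ G₃ ω : ℂ) (hω : ω ^ 3 = 1)
    (z : ℂ) (hz : z ≠ 0) :
    Gmat ω * KII z b F₁ F₂ G₁ G₂ G₃ * Matrix.diagonal ![1, ω ^ 2, ω] =
      KII z b (ω * F₁) F₂ G₁ (ω * G₂) (ω ^ 2 * G₃) := by
  ext i j
  fin_cases i <;> fin_cases j <;>
    simp [Gmat, KII, KII0, Tmat, Matrix.mul_apply, Fin.sum_univ_succ,
      Matrix.one_apply, Matrix.vecHead, Matrix.vecTail] <;>
    (first
      | linear_combination 0 * hω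
      | linear_combination (b * z ^ 2 + z ^ 4 * F₂ * G₁) * hω
      | linear_combination (-(b * z ^ 2) - z ^ 4 * F₂ * G₁) * hω
      | linear_combination (F₁ * G₃) * hω
      | linear_combination (-(F₁ * G₃)) * hω
      | linear_combination (F₁ * G₃ - b * z ^ 2 - z ^ 4 * F₂ * G₁) * hω
      | linear_combination (b * z ^ 2 + z ^ 4 * F₂ * G₁ - F₁ * G₃) * hω)
end

section
/- Transformation of the second family under T-conjugation: for all b,F₁,F₂,G₁,G₂,G₃ ∈ ℂ and every z ∈ ℂ with z ≠ 0, one has T · K_II(z; b,F₁,F₂,G₁,G₂,G₃) · T = z⁴ · K_II(z⁻¹; b, F₂, F₁, −G₃, G₂, −G₁). -/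
open Matrix Kronecker

set_option maxHeartbeats 2000000 in
/-- Transformation of the second family under `T`-conjugation. -/
theorem KII_T_conjugation (b F₁ F₂ G₁ G₂ G₃ : ℂ) (z : ℂ) (hz : z ≠ 0) :
    Tmat * KII z b F₁ F₂ G₁ G₂ G₃ * Tmat =
      z ^ 4 • KII z⁻¹ b F₂ F₁ (-G₃) G₂ (-G₁) := by
  have hz4 : z ^ 4 ≠ 0 := pow_ne_zero _ hz
  ext i j
  fin_cases i <;> fin_cases j <;>
    simp [KII, KII0, Tmat, Matrix.mul_apply, Fin.sum_univ_three, Matrix.one_apply,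
      Matrix.vecHead, Matrix.vecTail] <;>
    field_simp <;> ring
end

section
/- G-conjugation preserves solutions of the reflection equation: let q ∈ ℂ with q ≠ 0, q² ≠ 1, let ω ∈ ℂ with ω³ = 1, and set G = diag(1, ω, ω²). If K assigns a 3×3 complex matrix K(z) to each nonzero z ∈ ℂ and satisfies the reflection equation (with parameter q) at every admissible pair (z₁,z₂), then the function z ↦ G K(z) G⁻¹ also satisfies the reflection equation (with parameter q) at every admissible pair. -/
open Matrix Kronecker

lemma Rcg_support {z q : ℂ} {p r : Fin 3 × Fin 3} (h : Rcg z q p r ≠ 0) :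
    (p.1 : ℕ) + (p.2 : ℕ) = (r.1 : ℕ) + (r.2 : ℕ) := by
  unfold Rcg at h
  split_ifs at h <;> simp_all [Fin.ext_iff] <;> omega

lemma Pflip_support {p r : Fin 3 × Fin 3} (h : Pflip p r ≠ 0) :
    (p.1 : ℕ) + (p.2 : ℕ) = (r.1 : ℕ) + (r.2 : ℕ) := by
  unfold Pflip at h
  split_ifs at h <;> simp_all [Fin.ext_iff] <;> omega

lemma diag_comm {d : Fin 3 × Fin 3 → ℂ} {M : Matrix (Fin 3 × Fin 3) (Fin 3 × Fin 3) ℂ}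
    (h : ∀ p r, M p r ≠ 0 → d p = d r) :
    Matrix.diagonal d * M = M * Matrix.diagonal d := by
  ext p r
  rw [Matrix.diagonal_mul, Matrix.mul_diagonal]
  by_cases hM : M p r = 0
  · simp [hM]
  · rw [h p r hM, mul_comm]

/-- `G`-conjugation preserves solutions of the reflection equation. -/
theorem G_conjugation_preserves_reflection (q : ℂ) (hq : q ≠ 0) (hq2 : q ^ 2 ≠ 1)
    (ω : ℂ) (hω : ω ^ 3 = 1) (K : ℂ → Matrix (Fin 3) (Fin 3) ℂ)
    (hK : ∀ z₁ z₂ : ℂ, z₁ ≠ 0 → z₂ ≠ 0 → z₁ ^ 2 ≠ z₂ ^ 2 → z₁ ^ 2 * z₂ ^ 2 ≠ 1 →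
      ReflEq q K z₁ z₂) :
    ∀ z₁ z₂ : ℂ, z₁ ≠ 0 → z₂ ≠ 0 → z₁ ^ 2 ≠ z₂ ^ 2 → z₁ ^ 2 * z₂ ^ 2 ≠ 1 →
      ReflEq q (fun z => Gmat ω * K z * Matrix.diagonal ![1, ω ^ 2, ω]) z₁ z₂ := by
  intro z₁ z₂ h1 h2 h3 h4
  set G : Matrix (Fin 3) (Fin 3) ℂ := Gmat ω with hG
  set G' : Matrix (Fin 3) (Fin 3) ℂ := Matrix.diagonal ![1, ω ^ 2, ω] with hG'def
  have hGG' : G * G' = 1 := by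
    ext i j
    fin_cases i <;> fin_cases j <;>
      simp [hG, hG'def, Gmat, Matrix.mul_apply, Fin.sum_univ_three, Matrix.diagonal,
        Matrix.one_apply] <;>
      linear_combination hω
  have hG'G : G' * G = 1 := by
    ext i j
    fin_cases i <;> fin_cases j <;>
      simp [hG, hG'def, Gmat, Matrix.mul_apply, Fin.sum_univ_three, Matrix.diagonal,
        Matrix.one_apply] <;>
      linear_combination hω
  set A : Matrix (Fin 3 × Fin 3) (Fin 3 × Fin 3) ℂ := G ⊗ₖ G with hA
  set A' : Matrix (Fin 3 × Fin 3) (Fin 3 × Fin 3) ℂ := G' ⊗ₖ G' with hA'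
  have hAA' : A * A' = 1 := by
    rw [hA, hA', ← Matrix.mul_kronecker_mul, hGG', Matrix.one_kronecker_one]
  have hA'A : A' * A = 1 := by
    rw [hA, hA', ← Matrix.mul_kronecker_mul, hG'G, Matrix.one_kronecker_one]
  have hfun : (fun mn : Fin 3 × Fin 3 => ![1, ω, ω ^ 2] mn.1 * ![1, ω, ω ^ 2] mn.2)
      = fun p : Fin 3 × Fin 3 => ω ^ ((p.1 : ℕ) + (p.2 : ℕ)) := by
    funext p
    obtain ⟨i, j⟩ := p
    fin_cases i <;> fin_cases j <;> simp <;> ring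
  have hAdiag : A = Matrix.diagonal (fun p => ω ^ ((p.1 : ℕ) + (p.2 : ℕ))) := by
    rw [hA, hG, Gmat, Matrix.diagonal_kronecker_diagonal, hfun]
  have hAR : ∀ z, A * Rcg z q = Rcg z q * A := by
    intro z
    rw [hAdiag]
    exact diag_comm fun p r hM => by rw [Rcg_support hM]
  have hAP : A * Pflip = Pflip * A := by
    rw [hAdiag]
    exact diag_comm fun p r hM => by rw [Pflip_support hM]
  have hcomm_mul : ∀ {X Y : Matrix (Fin 3 × Fin 3) (Fin 3 × Fin 3) ℂ},
      A * X = X * A → A * Y = Y * A → A * (X * Y) = X * Y * A := by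
    intro X Y hX hY
    rw [← Matrix.mul_assoc, hX, Matrix.mul_assoc, hY, Matrix.mul_assoc]
  have hAR21 : ∀ z, A * R21 z q = R21 z q * A := by
    intro z
    simp only [R21]
    exact hcomm_mul (hcomm_mul hAP (hAR z)) hAP
  have hfix : ∀ X : Matrix (Fin 3 × Fin 3) (Fin 3 × Fin 3) ℂ,
      A * X = X * A → A * X * A' = X := by
    intro X h
    rw [h, Matrix.mul_assoc, hAA', Matrix.mul_one]
  have hmul : ∀ X Y : Matrix (Fin 3 × Fin 3) (Fin 3 × Fin 3) ℂ,
      (A * X * A') * (A * Y * A') = A * (X * Y) * A' := by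
    intro X Y
    simp only [Matrix.mul_assoc]
    rw [← Matrix.mul_assoc A' A, hA'A, Matrix.one_mul]
  have hMl : ∀ M : Matrix (Fin 3) (Fin 3) ℂ,
      Mleft (G * M * G') = A * Mleft M * A' := by
    intro M
    simp only [Mleft, hA, hA', ← Matrix.mul_kronecker_mul, Matrix.mul_one, hGG']
  have hMr : ∀ M : Matrix (Fin 3) (Fin 3) ℂ,
      Mright (G * M * G') = A * Mright M * A' := by
    intro M
    simp only [Mright, hA, hA', ← Matrix.mul_kronecker_mul, Matrix.mul_one, Matrix.one_mul, hGG']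
  have key := hK z₁ z₂ h1 h2 h3 h4
  unfold ReflEq at key ⊢
  simp only [hMl, hMr]
  rw [← hfix _ (hAR (z₁ / z₂)), ← hfix _ (hAR21 (z₁ * z₂)), ← hfix _ (hAR (z₁ * z₂)),
    ← hfix _ (hAR21 (z₁ / z₂))]
  simp only [hmul]
  rw [key]
end

section
/- T-conjugation combined with inversion of the spectral parameter maps reflection-equation solutions for parameter q to solutions for parameter q⁻¹: let q ∈ ℂ with q ≠ 0, q² ≠ 1. If K assigns a 3×3 complex matrix K(z) to each nonzero z ∈ ℂ and satisfies the reflection equation with parameter q at every admissible pair (z₁,z₂), then the function K'(z) := T K(z⁻¹) T satisfies the reflection equation with parameter q⁻¹ at every admissible pair (z₁,z₂). -/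
open Matrix Kronecker

/-! ### Auxiliary lemmas -/

lemma Tmat_mul_Tmat : Tmat * Tmat = 1 := by
  ext i j
  fin_cases i <;> fin_cases j <;>
    simp [Tmat, Matrix.mul_apply, Fin.sum_univ_succ, Matrix.one_apply]

/-- `T ⊗ T`. -/
noncomputable def TTm : Matrix (Fin 3 × Fin 3) (Fin 3 × Fin 3) ℂ := Tmat ⊗ₖ Tmat

lemma TTm_mul_TTm : TTm * TTm = 1 := by
  rw [TTm, ← Matrix.mul_kronecker_mul, Tmat_mul_Tmat, Matrix.one_kronecker_one]

lemma mul_TTm (M : Matrix (Fin 3 × Fin 3) (Fin 3 × Fin 3) ℂ) (p r) :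
    (M * TTm) p r = M p (![2,1,0] r.1, ![2,1,0] r.2) := by
  obtain ⟨k, l⟩ := r
  fin_cases k <;> fin_cases l <;>
    simp [TTm, Tmat, Matrix.mul_apply, Fintype.sum_prod_type, Fin.sum_univ_succ]

lemma TTm_mul (M : Matrix (Fin 3 × Fin 3) (Fin 3 × Fin 3) ℂ) (p r) :
    (TTm * M) p r = M (![2,1,0] p.1, ![2,1,0] p.2) r := by
  obtain ⟨i, j⟩ := p
  fin_cases i <;> fin_cases j <;>
    simp [TTm, Tmat, Matrix.mul_apply, Fintype.sum_prod_type, Fin.sum_univ_succ]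

lemma aux2 (a b c : ℂ) : -(a / (b - c)) = a / (c - b) := by
  rw [show b - c = -(c - b) by ring, div_neg, neg_neg]

set_option maxHeartbeats 2000000 in
lemma key' (z q : ℂ) : Rcg z q⁻¹ * TTm = -(TTm * Rcg z⁻¹ q) := by
  ext p r
  rw [mul_TTm, Matrix.neg_apply, TTm_mul]
  fin_cases p <;> fin_cases r <;>
    simp [Rcg, inv_inv, Matrix.cons_val_zero, Matrix.cons_val_one, Matrix.head_cons] <;>
    first | ring1 | exact (aux2 _ _ _).symm

lemma key_s13 (z q : ℂ) : Rcg z q⁻¹ = -(TTm * Rcg z⁻¹ q * TTm) := by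
  calc Rcg z q⁻¹ = Rcg z q⁻¹ * TTm * TTm := by
        rw [Matrix.mul_assoc, TTm_mul_TTm, Matrix.mul_one]
    _ = -(TTm * Rcg z⁻¹ q) * TTm := by rw [key']
    _ = -(TTm * Rcg z⁻¹ q * TTm) := by rw [neg_mul]

lemma keyR21 (z q : ℂ) : R21 z q⁻¹ = -(TTm * R21 z⁻¹ q * TTm) := by
  ext p r
  have h := congrFun (congrFun (key_s13 z q) (p.2, p.1)) (r.2, r.1)
  simp only [R21, Matrix.neg_apply, mul_TTm, TTm_mul, mul_Pflip, Pflip_mul] at h ⊢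
  exact h

lemma TTm_Mleft (M : Matrix (Fin 3) (Fin 3) ℂ) :
    TTm * Mleft M * TTm = Mleft (Tmat * M * Tmat) := by
  show (Tmat ⊗ₖ Tmat) * (M ⊗ₖ 1) * (Tmat ⊗ₖ Tmat) = (Tmat * M * Tmat) ⊗ₖ 1
  rw [← Matrix.mul_kronecker_mul, ← Matrix.mul_kronecker_mul, Matrix.mul_one,
    Tmat_mul_Tmat]

lemma TTm_Mright (M : Matrix (Fin 3) (Fin 3) ℂ) :
    TTm * Mright M * TTm = Mright (Tmat * M * Tmat) := by
  show (Tmat ⊗ₖ Tmat) * ((1 : Matrix (Fin 3) (Fin 3) ℂ) ⊗ₖ M) * (Tmat ⊗ₖ Tmat)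
      = (1 : Matrix (Fin 3) (Fin 3) ℂ) ⊗ₖ (Tmat * M * Tmat)
  rw [← Matrix.mul_kronecker_mul, ← Matrix.mul_kronecker_mul, Matrix.mul_one,
    Tmat_mul_Tmat]

/-- `T`-conjugation combined with inversion of the spectral parameter maps
solutions for parameter `q` to solutions for parameter `q⁻¹`. -/
theorem T_conjugation_maps_reflection_solutions (q : ℂ) (hq : q ≠ 0) (hq2 : q ^ 2 ≠ 1)
    (K : ℂ → Matrix (Fin 3) (Fin 3) ℂ)
    (hK : ∀ z₁ z₂ : ℂ, z₁ ≠ 0 → z₂ ≠ 0 → z₁ ^ 2 ≠ z₂ ^ 2 → z₁ ^ 2 * z₂ ^ 2 ≠ 1 →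
      ReflEq q K z₁ z₂) :
    ∀ z₁ z₂ : ℂ, z₁ ≠ 0 → z₂ ≠ 0 → z₁ ^ 2 ≠ z₂ ^ 2 → z₁ ^ 2 * z₂ ^ 2 ≠ 1 →
      ReflEq q⁻¹ (fun z => Tmat * K z⁻¹ * Tmat) z₁ z₂ := by
  intro z₁ z₂ h1 h2 h3 h4
  have h3' : (z₁⁻¹) ^ 2 ≠ (z₂⁻¹) ^ 2 := by
    simp only [inv_pow]
    exact fun h => h3 (inv_injective h)
  have h4' : (z₁⁻¹) ^ 2 * (z₂⁻¹) ^ 2 ≠ 1 := by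
    simp only [inv_pow, ← mul_inv]
    exact fun h => h4 (by rwa [inv_eq_one] at h)
  have E := hK z₁⁻¹ z₂⁻¹ (inv_ne_zero h1) (inv_ne_zero h2) h3' h4'
  unfold ReflEq at E ⊢
  have ed : z₁⁻¹ / z₂⁻¹ = (z₁ / z₂)⁻¹ := by
    rw [div_eq_mul_inv, div_eq_mul_inv, mul_inv, inv_inv, mul_comm]
  have em : z₁⁻¹ * z₂⁻¹ = (z₁ * z₂)⁻¹ := (mul_inv z₁ z₂).symm
  rw [ed, em] at E
  simp only []
  rw [key_s13 (z₁ / z₂) q, key_s13 (z₁ * z₂) q, keyR21 (z₁ * z₂) q, keyR21 (z₁ / z₂) q,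
    ← TTm_Mleft, ← TTm_Mright]
  have cancel2 : ∀ X : Matrix (Fin 3 × Fin 3) (Fin 3 × Fin 3) ℂ, X * TTm * TTm = X :=
    fun X => by rw [Matrix.mul_assoc, TTm_mul_TTm, Matrix.mul_one]
  simp only [Matrix.neg_mul, Matrix.mul_neg, neg_neg, ← Matrix.mul_assoc, cancel2]
  have E2 := congrArg (fun X => X * TTm) E
  simp only [Matrix.mul_assoc] at E2
  simp only [Matrix.mul_assoc]
  rw [E2]
end

section
/- The (00|00) entry of the reflection-equation difference factors through the bilinear form A₅: for all q, z₁, z₂ ∈ ℂ with q ≠ 0, q² ≠ 1, z₁ ≠ 0, z₂ ≠ 0, z₁² ≠ z₂², z₁²z₂² ≠ 1, and for all 3×3 complex matrices A and B, the entry of D := R(z₁/z₂,q) A₁ R₂₁(z₁z₂) B₂ − B₂ R(z₁z₂,q) A₁ R₂₁(z₁/z₂) in row (0,0), column (0,0) satisfies (q² − 1)(z₂² − z₁²)(1 − z₁²z₂²) · D^{00}_{00} = (q²z₂² − z₁²) · (A₀₁B₁₀ − A₁₀B₀₁ + A₀₂B₂₀ − A₂₀B₀₂), where A_{ij} denotes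 the entry of A in row i, column j. -/
open Matrix Kronecker

lemma Pflip_eq : Pflip = (1 : Matrix (Fin 3 × Fin 3) (Fin 3 × Fin 3) ℂ).submatrix
    (Equiv.prodComm (Fin 3) (Fin 3)) ⇑(Equiv.refl (Fin 3 × Fin 3)) := by
  ext p r
  simp [Pflip, Matrix.one_apply, Prod.ext_iff, and_comm]

lemma key_cancel (d1 d2 d3 n m a00 a01 a02 a10 a20 b00 b01 b02 b10 b20 : ℂ)
    (h1 : d1 ≠ 0) (h2 : d2 ≠ 0) (h3 : d3 ≠ 0) :
    d1 * (-d2) * (-d3) *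
      (n / (d1 * d2) * a00 * (m / (d1 * d3)) * b00
        + n / (d1 * d2) * a01 * (1 / d3) * b10
        + n / (d1 * d2) * a02 * (1 / d3) * b20
        - (b00 * (m / (d1 * d3)) * a00 + b01 * (1 / d3) * a10 + b02 * (1 / d3) * a20)
            * (n / (d1 * d2))) =
    n * (a01 * b10 - a10 * b01 + a02 * b20 - a20 * b02) := by
  have i12 : (d1 * d2) * (d1 * d2)⁻¹ = 1 := mul_inv_cancel₀ (mul_ne_zero h1 h2)
  have i3 : d3 * d3⁻¹ = 1 := mul_inv_cancel₀ h3
  linear_combination (n * (a01 * b10 - a10 * b01 + a02 * b20 - a20 * b02) * (d3 * d3⁻¹)) * i12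
    + (n * (a01 * b10 - a10 * b01 + a02 * b20 - a20 * b02)) * i3

set_option maxHeartbeats 2000000 in
/-- The `(00|00)` entry of the reflection-equation difference factors through `A₅`. -/
theorem reflection_difference_0000_entry (q z₁ z₂ : ℂ) (hq : q ≠ 0)
    (hq2 : q ^ 2 ≠ 1) (hz₁ : z₁ ≠ 0) (hz₂ : z₂ ≠ 0) (hzz : z₁ ^ 2 ≠ z₂ ^ 2)
    (hz₁₂ : z₁ ^ 2 * z₂ ^ 2 ≠ 1) (A B : Matrix (Fin 3) (Fin 3) ℂ) :
    let D := Rcg (z₁ / z₂) q * Mleft A * R21 (z₁ * z₂) q * Mright B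
      - Mright B * Rcg (z₁ * z₂) q * Mleft A * R21 (z₁ / z₂) q
    (q ^ 2 - 1) * (z₂ ^ 2 - z₁ ^ 2) * (1 - z₁ ^ 2 * z₂ ^ 2) * D (0, 0) (0, 0) =
      (q ^ 2 * z₂ ^ 2 - z₁ ^ 2) *
        (A 0 1 * B 1 0 - A 1 0 * B 0 1 + A 0 2 * B 2 0 - A 2 0 * B 0 2) := by
  intro D
  have hD : D (0,0) (0,0) = (Rcg (z₁ / z₂) q * Mleft A * R21 (z₁ * z₂) q * Mright B) (0,0) (0,0)
      - (Mright B * Rcg (z₁ * z₂) q * Mleft A * R21 (z₁ / z₂) q) (0,0) (0,0) := rfl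
  rw [hD]
  simp only [Matrix.mul_apply, Fintype.sum_prod_type, Fin.sum_univ_three, R21_apply,
    Mleft, Mright, Matrix.kroneckerMap_apply, Matrix.one_apply]
  norm_num [Rcg, Prod.ext_iff, Fin.ext_iff]
  have e1 : q - q⁻¹ = (q ^ 2 - 1) / q := by field_simp
  have e2 : z₁ / z₂ - z₂ / z₁ = (z₁ ^ 2 - z₂ ^ 2) / (z₁ * z₂) := by field_simp
  have e3 : z₁ * z₂ - z₂⁻¹ * z₁⁻¹ = (z₁ ^ 2 * z₂ ^ 2 - 1) / (z₁ * z₂) := by field_simp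
  have n1 : q * (z₂ / z₁) - q⁻¹ * (z₁ / z₂) = (q ^ 2 * z₂ ^ 2 - z₁ ^ 2) / (q * z₁ * z₂) := by
    field_simp
  have n2 : q * (z₂⁻¹ * z₁⁻¹) - q⁻¹ * (z₁ * z₂) = (q ^ 2 - z₁ ^ 2 * z₂ ^ 2) / (q * z₁ * z₂) := by
    field_simp
  rw [e1, e2, e3, n1, n2]
  have hA : q ^ 2 - 1 ≠ 0 := sub_ne_zero.mpr hq2
  have hB : z₁ ^ 2 - z₂ ^ 2 ≠ 0 := sub_ne_zero.mpr hzz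
  have hC : z₁ ^ 2 * z₂ ^ 2 - 1 ≠ 0 := sub_ne_zero.mpr hz₁₂
  have ha : (q ^ 2 * z₂ ^ 2 - z₁ ^ 2) / (q * z₁ * z₂) / ((q ^ 2 - 1) / q * ((z₁ ^ 2 - z₂ ^ 2) / (z₁ * z₂)))
      = (q ^ 2 * z₂ ^ 2 - z₁ ^ 2) / ((q ^ 2 - 1) * (z₁ ^ 2 - z₂ ^ 2)) := by
    field_simp
  have hb : (q ^ 2 - z₁ ^ 2 * z₂ ^ 2) / (q * z₁ * z₂) / ((q ^ 2 - 1) / q * ((z₁ ^ 2 * z₂ ^ 2 - 1) / (z₁ * z₂)))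
      = (q ^ 2 - z₁ ^ 2 * z₂ ^ 2) / ((q ^ 2 - 1) * (z₁ ^ 2 * z₂ ^ 2 - 1)) := by
    field_simp
  have hc : z₂⁻¹ * z₁⁻¹ / ((z₁ ^ 2 * z₂ ^ 2 - 1) / (z₁ * z₂)) = 1 / (z₁ ^ 2 * z₂ ^ 2 - 1) := by
    field_simp
  rw [ha, hb, hc]
  linear_combination key_cancel (q ^ 2 - 1) (z₁ ^ 2 - z₂ ^ 2) (z₁ ^ 2 * z₂ ^ 2 - 1)
    (q ^ 2 * z₂ ^ 2 - z₁ ^ 2) (q ^ 2 - z₁ ^ 2 * z₂ ^ 2) (A 0 0) (A 0 1) (A 0 2) (A 1 0) (A 2 0)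
    (B 0 0) (B 0 1) (B 0 2) (B 1 0) (B 2 0) hA hB hC
end

section
/- Let a₀,a₁,a₂,a₃,a₄,ā₀,ā₁,ā₂,ā₃,ā₄ ∈ ℂ satisfy the 14 relations: a₀ā₀ = a₁ā₁; a₂ā₂ = a₃ā₃; a₀² = a₁a₄; ā₀² = ā₁ā₄; a₁ā₀ = a₀ā₄; ā₁a₀ = ā₀a₄; a₀a₃ = a₁ā₂; ā₀ā₃ = ā₁a₂; a₀a₂ = ā₃a₁; ā₀ā₂ = a₃ā₁; a₂ā₀ = ā₃ā₄; ā₂a₀ = a₃a₄; a₂a₄ = a₀ā₃; ā₂ā₄ = ā₀a₃. If at least one of a₀, ā₀, a₁, ā₁, a₂, ā₂, a₃, ā₃ is nonzero, then a₀ā₀ = a₄ā₄. -/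
open Matrix Kronecker

/-- Points of the variety `𝒱_I` satisfy `a₀a₀' = a₄a₄'` whenever one of the first
eight coordinates is nonzero. -/
theorem variety_extra_relation (a₀ a₁ a₂ a₃ a₄ a₀' a₁' a₂' a₃' a₄' : ℂ)
    (h1 : a₀ * a₀' = a₁ * a₁') (h2 : a₂ * a₂' = a₃ * a₃')
    (h3 : a₀ ^ 2 = a₁ * a₄) (h4 : a₀' ^ 2 = a₁' * a₄')
    (h5 : a₁ * a₀' = a₀ * a₄') (h6 : a₁' * a₀ = a₀' * a₄)
    (h7 : a₀ * a₃ = a₁ * a₂') (h8 : a₀' * a₃' = a₁' * a₂)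
    (h9 : a₀ * a₂ = a₃' * a₁) (h10 : a₀' * a₂' = a₃ * a₁')
    (h11 : a₂ * a₀' = a₃' * a₄') (h12 : a₂' * a₀ = a₃ * a₄)
    (h13 : a₂ * a₄ = a₀ * a₃') (h14 : a₂' * a₄' = a₀' * a₃)
    (hne : a₀ ≠ 0 ∨ a₀' ≠ 0 ∨ a₁ ≠ 0 ∨ a₁' ≠ 0 ∨ a₂ ≠ 0 ∨ a₂' ≠ 0 ∨ a₃ ≠ 0 ∨ a₃' ≠ 0) :
    a₀ * a₀' = a₄ * a₄' := by
  by_cases h0 : a₀ = 0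
  · by_cases h0' : a₀' = 0
    · subst h0; subst h0'
      rcases hne with h | h | h | h | h | h | h | h
      · exact absurd rfl h
      · exact absurd rfl h
      · have ha : a₄ = 0 := by
          rcases mul_eq_zero.mp (h3.symm.trans (by ring)) with hh | hh
          · exact absurd hh h
          · exact hh
        rw [ha]; ring
      · have ha : a₄' = 0 := by
          rcases mul_eq_zero.mp (h4.symm.trans (by ring)) with hh | hh
          · exact absurd hh h
          · exact hh
        rw [ha]; ring
      · have ha : a₄ = 0 := by
          have : a₂ * a₄ = 0 := by rw [h13]; ring
          rcases mul_eq_zero.mp this with hh | hh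
          · exact absurd hh h
          · exact hh
        rw [ha]; ring
      · have ha : a₄' = 0 := by
          have : a₂' * a₄' = 0 := by rw [h14]; ring
          rcases mul_eq_zero.mp this with hh | hh
          · exact absurd hh h
          · exact hh
        rw [ha]; ring
      · have ha : a₄ = 0 := by
          have : a₃ * a₄ = 0 := by rw [← h12]; ring
          rcases mul_eq_zero.mp this with hh | hh
          · exact absurd hh h
          · exact hh
        rw [ha]; ring
      · have ha : a₄' = 0 := by
          have : a₃' * a₄' = 0 := by rw [← h11]; ring
          rcases mul_eq_zero.mp this with hh | hh
          · exact absurd hh h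
          · exact hh
        rw [ha]; ring
    · have key : a₀' * (a₀ * a₀') = a₀' * (a₄ * a₄') := by
        linear_combination a₀ * h4 + a₄' * h6
      exact mul_left_cancel₀ h0' key
  · have key : a₀ * (a₀ * a₀') = a₀ * (a₄ * a₄') := by
      linear_combination a₀' * h3 + a₄ * h5
    exact mul_left_cancel₀ h0 key
end

section
/- Parametrization of the solution variety: a tuple (a₀,a₁,a₂,a₃,a₄,ā₀,ā₁,ā₂,ā₃,ā₄) ∈ ℂ¹⁰ satisfies the 15 relations a₀ā₀ = a₄ā₄; a₀ā₀ = a₁ā₁; a₂ā₂ = a₃ā₃; a₀² = a₁a₄; ā₀² = ā₁ā₄; a₁ā₀ = a₀ā₄; ā₁a₀ = ā₀a₄; a₀a₃ = a₁ā₂; ā₀ā₃ = ā₁a₂; a₀a₂ = ā₃a₁; ā₀ā₂ = a₃ā₁; a₂ā₀ = ā₃ā₄; ā₂a₀ = a₃a₄; a₂a₄ = a₀ā₃; ā₂ā₄ = ā₀a₃ if and only if there exist A₁, A₂, Ā₁, Ā₂, B₁, B₂, B̄₁, B̄₂ ∈ ℂ such that a₀ = A₁A₂, a₁ = A₁²,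 a₄ = A₂², ā₀ = Ā₁Ā₂, ā₁ = Ā₁², ā₄ = Ā₂², a₂ = B₂B̄₂, ā₂ = B₁B̄₁, a₃ = B₁B̄₂, ā₃ = B̄₁B₂, and moreover A₁Ā₁ = A₂Ā₂, Ā₁B̄₂ = Ā₂B̄₁, and B̄₂A₂ = B̄₁A₁. -/
open Matrix Kronecker

private lemma sq_zero_eq {x y : ℂ} (h : (x - y) ^ 2 = 0) : x = y :=
  sub_eq_zero.mp (pow_eq_zero_iff two_ne_zero |>.mp h)

private lemma sqrt_pair (a₀ a₁ a₄ : ℂ) (h : a₀ ^ 2 = a₁ * a₄) :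
    ∃ A₁ A₂ : ℂ, a₀ = A₁ * A₂ ∧ a₁ = A₁ ^ 2 ∧ a₄ = A₂ ^ 2 := by
  obtain ⟨A₁, hA₁⟩ := IsAlgClosed.exists_pow_nat_eq a₁ (n := 2) two_pos
  by_cases h0 : A₁ = 0
  · obtain ⟨A₂, hA₂⟩ := IsAlgClosed.exists_pow_nat_eq a₄ (n := 2) two_pos
    have ha1 : a₁ = 0 := by rw [← hA₁, h0]; ring
    have ha0 : a₀ = 0 := by
      have : a₀ ^ 2 = 0 := by rw [h, ha1]; ring
      exact pow_eq_zero_iff two_ne_zero |>.mp this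
    exact ⟨0, A₂, by rw [ha0]; ring, by rw [ha1]; ring, hA₂.symm⟩
  · refine ⟨A₁, a₀ / A₁, ?_, hA₁.symm, ?_⟩
    · field_simp
    · field_simp
      rw [h, ← hA₁]; ring

/-- Parametrization of the solution variety `𝒱_I`. -/
theorem variety_parametrization (a₀ a₁ a₂ a₃ a₄ a₀' a₁' a₂' a₃' a₄' : ℂ) :
    (a₀ * a₀' = a₄ * a₄' ∧ a₀ * a₀' = a₁ * a₁' ∧ a₂ * a₂' = a₃ * a₃' ∧
      a₀ ^ 2 = a₁ * a₄ ∧ a₀' ^ 2 = a₁' * a₄' ∧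
      a₁ * a₀' = a₀ * a₄' ∧ a₁' * a₀ = a₀' * a₄ ∧
      a₀ * a₃ = a₁ * a₂' ∧ a₀' * a₃' = a₁' * a₂ ∧
      a₀ * a₂ = a₃' * a₁ ∧ a₀' * a₂' = a₃ * a₁' ∧
      a₂ * a₀' = a₃' * a₄' ∧ a₂' * a₀ = a₃ * a₄ ∧
      a₂ * a₄ = a₀ * a₃' ∧ a₂' * a₄' = a₀' * a₃) ↔
    (∃ A₁ A₂ A₁' A₂' B₁ B₂ B₁' B₂' : ℂ,
      a₀ = A₁ * A₂ ∧ a₁ = A₁ ^ 2 ∧ a₄ = A₂ ^ 2 ∧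
      a₀' = A₁' * A₂' ∧ a₁' = A₁' ^ 2 ∧ a₄' = A₂' ^ 2 ∧
      a₂ = B₂ * B₂' ∧ a₂' = B₁ * B₁' ∧ a₃ = B₁ * B₂' ∧ a₃' = B₁' * B₂ ∧
      A₁ * A₁' = A₂ * A₂' ∧ A₁' * B₂' = A₂' * B₁' ∧ B₂' * A₂ = B₁' * A₁) := by
  constructor
  · rintro ⟨h1, h2, h3, h4, h5, h6, h7, h8, h9, h10, h11, h12, h13, h14, h15⟩
    obtain ⟨A₁, A₂, e0, e1, e4⟩ := sqrt_pair a₀ a₁ a₄ h4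
    obtain ⟨C₁, C₂, f0, f1, f4⟩ := sqrt_pair a₀' a₁' a₄' h5
    subst e0 e1 e4 f0 f1 f4
    -- A-compatibility
    have hA : A₁ * C₁ = A₂ * C₂ := by
      apply sq_zero_eq
      linear_combination - h1 - h2
    -- B̄-compatibility identities
    have I1 : C₁ * a₃ = C₂ * a₂' := by
      apply sq_zero_eq
      linear_combination - a₃ * h11 + a₂' * h15
    have I2 : A₂ * a₃ = A₁ * a₂' := by
      apply sq_zero_eq
      linear_combination - a₂' * h8 - a₃ * h13
    have I3 : C₁ * a₂ = C₂ * a₃' := by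
      apply sq_zero_eq
      linear_combination - a₂ * h9 - a₃' * h12
    have I4 : A₂ * a₂ = A₁ * a₃' := by
      apply sq_zero_eq
      linear_combination - a₃' * h10 + a₂ * h14
    by_cases c1 : a₂' ≠ 0
    · refine ⟨A₁, A₂, C₁, C₂, 1, a₃' / a₂', a₂', a₃,
        rfl, rfl, rfl, rfl, rfl, rfl, ?_, by ring, by ring, ?_, hA, I1, by linear_combination I2⟩
      · field_simp
        linear_combination h3
      · field_simp
    · push_neg at c1
      by_cases c2 : a₃ ≠ 0
      · have h3' : a₃' = 0 := by
          have := h3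
          rw [c1] at this
          have : a₃ * a₃' = 0 := by linear_combination - this
          rcases mul_eq_zero.mp this with h | h
          · exact absurd h c2
          · exact h
        refine ⟨A₁, A₂, C₁, C₂, 1, a₂ / a₃, a₂', a₃,
          rfl, rfl, rfl, rfl, rfl, rfl, ?_, by ring, by ring, ?_, hA, I1, by linear_combination I2⟩
        · field_simp
        · rw [c1, h3']; ring
      · push_neg at c2
        by_cases c3 : a₃' ≠ 0
        · refine ⟨A₁, A₂, C₁, C₂, 0, 1, a₃', a₂,
            rfl, rfl, rfl, rfl, rfl, rfl, by ring, by rw [c1]; ring,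
            by rw [c2]; ring, by ring, hA, I3, by linear_combination I4⟩
        · push_neg at c3
          refine ⟨A₁, A₂, C₁, C₂, 0, 1, 0, a₂,
            rfl, rfl, rfl, rfl, rfl, rfl, by ring, by rw [c1]; ring,
            by rw [c2]; ring, by rw [c3]; ring, hA, ?_, ?_⟩
          · rw [c3] at I3
            linear_combination I3
          · rw [c3] at I4
            linear_combination I4

  · rintro ⟨A₁, A₂, C₁, C₂, B₁, B₂, D₁, D₂, rfl, rfl, rfl, rfl, rfl, rfl, rfl, rfl, rfl, rfl,
      k1, k2, k3⟩
    refine ⟨?_, ?_, by ring, by ring, by ring, ?_, ?_, ?_, ?_, ?_, ?_, ?_, ?_, ?_, ?_⟩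
    · linear_combination A₂ * C₂ * k1
    · linear_combination - A₁ * C₁ * k1
    · linear_combination A₁ * C₂ * k1
    · linear_combination C₁ * A₂ * k1
    · linear_combination A₁ * B₁ * k3
    · linear_combination - C₁ * B₂ * k2
    · linear_combination A₁ * B₂ * k3
    · linear_combination - C₁ * B₁ * k2
    · linear_combination B₂ * C₂ * k2
    · linear_combination - A₂ * B₁ * k3
    · linear_combination A₂ * B₂ * k3
    · linear_combination - C₂ * B₁ * k2
end

section
/- The common lower-triangular family lies in both solution families: for all c₁, c₂, c₃, c₄ ∈ ℂ, define C(z) := [[c₃ + c₄z², 0, 0],[c₂(z⁴−1), c₄z² + c₃z⁴, 0],[c₁(z⁴−1), 0, c₄z² + c₃z⁴]] for z ≠ 0. Then (a) C(z) = K_II(z; b=c₄, F₁=0, F₂=1, G₁=c₃, G₂=−c₂, G₃=c₁) for every z ≠ 0, and (b) there exist B₁, B₂, D₁, D₂, E₁, E₂, E₃ ∈ ℂ such that C(z) = K_I(z; B₁,B₂,D₁,D₂,E₁,E₂,E₃) for every z ≠ 0. -/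
open Matrix Kronecker

/-- The common lower-triangular family `C(z)`. -/
noncomputable def Cmat (z c₁ c₂ c₃ c₄ : ℂ) : Matrix (Fin 3) (Fin 3) ℂ :=
  !![c₃ + c₄ * z ^ 2, 0, 0;
     c₂ * (z ^ 4 - 1), c₄ * z ^ 2 + c₃ * z ^ 4, 0;
     c₁ * (z ^ 4 - 1), 0, c₄ * z ^ 2 + c₃ * z ^ 4]

set_option maxHeartbeats 1000000 in
/-- The common lower-triangular family lies in both solution families. -/
theorem common_family_in_both (c₁ c₂ c₃ c₄ : ℂ) :
    (∀ z : ℂ, z ≠ 0 → Cmat z c₁ c₂ c₃ c₄ = KII z c₄ 0 1 c₃ (-c₂) c₁) ∧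
    (∃ B₁ B₂ D₁ D₂ E₁ E₂ E₃ : ℂ, ∀ z : ℂ, z ≠ 0 →
      Cmat z c₁ c₂ c₃ c₄ = KI z B₁ B₂ D₁ D₂ E₁ E₂ E₃) := by
  constructor
  · intro z hz
    ext i j
    fin_cases i <;> fin_cases j <;>
      simp [Cmat, KII, KII0, Tmat_eq, Matrix.mul_fin_three, Matrix.one_apply]
    all_goals try field_simp
    all_goals try ring
  · obtain ⟨e₁, he₁⟩ := IsAlgClosed.exists_pow_nat_eq c₄ (n := 2) two_pos
    obtain ⟨e₃, he₃⟩ := IsAlgClosed.exists_pow_nat_eq c₁ (n := 2) two_pos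
    refine ⟨c₂, c₃, 0, 1, e₁, 1, e₃, ?_⟩
    intro z hz
    ext i j
    fin_cases i <;> fin_cases j <;>
      simp [Cmat, KI, KI0, KI1, Tmat_eq, Matrix.mul_fin_three, he₁, he₃]
    all_goals try field_simp
    all_goals try ring
end
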